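/- Suppose Q is in rational normal form with parameters z and k_1,…,k_d, and γ is generic. Let α be a normalized 2-cocycle on g(γ,Q) and write α(m)=α(L_m,L_{−m}). If m∈ℤ^d∖R and m_i≠0 for some odd index i with 1≤i≤2z, then α(m)=((γ|m)/(γ|e_1))·σ(m,−m)·α(e_1). -/

import Mathlib

open scoped BigOperators

namespace QTorus

/-- σ(m,n) = ∏_{i<j} q_{ji}^{m_j n_i}. -/
noncomputable def qsigma (d : ℕ) (Q : Matrix (Fin d) (Fin d) ℂ) (m n : Fin d → ℤ) : ℂ :=
  ∏ i : Fin d, ∏ j : Fin d, if i < j then Q j i ^ (m j * n i) else 1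

/-- The radical subgroup R = {m | σ(m,n)=σ(n,m) for all n}. -/
def Rset (d : ℕ) (Q : Matrix (Fin d) (Fin d) ℂ) : Set (Fin d → ℤ) :=
  {m | ∀ n : Fin d → ℤ, qsigma d Q m n = qsigma d Q n m}

/-- (γ|m) = ∑ γ_i m_i. -/
noncomputable def ip (d : ℕ) (γ : Fin d → ℂ) (m : Fin d → ℤ) : ℂ :=
  ∑ i : Fin d, γ i * (m i : ℂ)

/-- The underlying vector space of g(γ,Q): formal ℂ-linear combinations of basis
vectors indexed by ℤ^d. -/
abbrev g (d : ℕ) := (Fin d → ℤ) →₀ ℂ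

/-- The basis vector L_m. -/
noncomputable def L (d : ℕ) (m : Fin d → ℤ) : g d := Finsupp.single m 1

/-- Hypotheses on the matrix Q: nonzero entries, q_{ii}=1, q_{ij}q_{ji}=1. -/
def QOk (d : ℕ) (Q : Matrix (Fin d) (Fin d) ℂ) : Prop :=
  (∀ i, Q i i = 1) ∧ (∀ i j, Q i j * Q j i = 1) ∧ (∀ i j, Q i j ≠ 0)

/-- γ is generic: γ_1,…,γ_d are linearly independent over ℚ. -/
def Generic (d : ℕ) (γ : Fin d → ℂ) : Prop := LinearIndependent ℚ γ

open Classical in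
/-- Structure constants of g(γ,Q): [L_m, L_n] = sc(m,n) • L_{m+n}. -/
noncomputable def sc (d : ℕ) (Q : Matrix (Fin d) (Fin d) ℂ) (γ : Fin d → ℂ)
    (m n : Fin d → ℤ) : ℂ :=
  if m ∈ Rset d Q then
    (if n ∈ Rset d Q then qsigma d Q m n * ip d γ (n - m)
     else qsigma d Q m n * ip d γ n)
  else
    (if n ∈ Rset d Q then -(qsigma d Q n m * ip d γ m)
     else qsigma d Q m n - qsigma d Q n m)

/-- The bracket of g(γ,Q), as the bilinear extension of
[L_m, L_n] = sc(m,n) • L_{m+n}. -/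
noncomputable def br (d : ℕ) (Q : Matrix (Fin d) (Fin d) ℂ) (γ : Fin d → ℂ)
    (x y : g d) : g d :=
  x.sum fun m a => y.sum fun n b => Finsupp.single (m + n) (a * b * sc d Q γ m n)

/-- A Lie algebra automorphism of g(γ,Q): a linear equivalence preserving the bracket. -/
def IsAut (d : ℕ) (Q : Matrix (Fin d) (Fin d) ℂ) (γ : Fin d → ℂ)
    (θ : g d ≃ₗ[ℂ] g d) : Prop :=
  ∀ x y : g d, θ (br d Q γ x y) = br d Q γ (θ x) (θ y)

/-- A derivation of g(γ,Q). -/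
def IsDer (d : ℕ) (Q : Matrix (Fin d) (Fin d) ℂ) (γ : Fin d → ℂ)
    (D : g d →ₗ[ℂ] g d) : Prop :=
  ∀ x y : g d, D (br d Q γ x y) = br d Q γ (D x) y + br d Q γ x (D y)

open Classical in
/-- δ(n,R) = 1 if n ∈ R, 0 otherwise. -/
noncomputable def deltaR (d : ℕ) (Q : Matrix (Fin d) (Fin d) ℂ) (n : Fin d → ℤ) : ℕ :=
  if n ∈ Rset d Q then 1 else 0

/-- A 2-cocycle on g(γ,Q). -/
def IsCocycle (d : ℕ) (Q : Matrix (Fin d) (Fin d) ℂ) (γ : Fin d → ℂ)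
    (α : g d →ₗ[ℂ] g d →ₗ[ℂ] ℂ) : Prop :=
  (∀ x y : g d, α x y = - α y x) ∧
  (∀ x y z : g d,
    α (br d Q γ x y) z + α (br d Q γ z x) y + α (br d Q γ y z) x = 0)

/-- i ↔ j is one of the exceptional index pairs (2l-1,2l) (1-based) of the rational
normal form. Here indices are 0-based. -/
def OffDiagPair (z : ℕ) (i j : ℕ) : Prop :=
  ∃ l : ℕ, l < z ∧ ((i = 2 * l ∧ j = 2 * l + 1) ∨ (i = 2 * l + 1 ∧ j = 2 * l))

/-- Q is in rational normal form with parameters z and k_1,…,k_d (0-based indexing: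
the paper's pair (2i-1,2i) is the Lean pair (2l, 2l+1) with l = i-1). -/
def IsRNF (d : ℕ) (Q : Matrix (Fin d) (Fin d) ℂ) (z : ℕ) (k : Fin d → ℕ) : Prop :=
  0 < z ∧ 2 * z ≤ d ∧
  (∀ i j : Fin d, ¬ OffDiagPair z i.val j.val → Q i j = 1) ∧
  (∀ (l : ℕ) (_ : l < z) (hi : 2 * l < d) (hj : 2 * l + 1 < d),
      IsPrimitiveRoot (Q ⟨2 * l, hi⟩ ⟨2 * l + 1, hj⟩) (k ⟨2 * l, hi⟩) ∧
      Q ⟨2 * l + 1, hj⟩ ⟨2 * l, hi⟩ = (Q ⟨2 * l, hi⟩ ⟨2 * l + 1, hj⟩)⁻¹ ∧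
      k ⟨2 * l + 1, hj⟩ = k ⟨2 * l, hi⟩ ∧
      1 < k ⟨2 * l, hi⟩) ∧
  (∀ (i : ℕ) (_ : i + 1 < 2 * z) (h1 : i < d) (h2 : i + 1 < d),
      k ⟨i + 1, h2⟩ ∣ k ⟨i, h1⟩) ∧
  (∀ i : Fin d, 2 * z ≤ i.val → k i = 1)

/-- The vector k_1 e_1 ∈ ℤ^d. -/
noncomputable def k1e1 (d : ℕ) (k : Fin d → ℕ) (hd : 0 < d) : Fin d → ℤ :=
  Pi.single ⟨0, hd⟩ (k ⟨0, hd⟩ : ℤ)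

/-- A 2-cocycle is normalized if α(L_{m-k₁e₁}, L_{k₁e₁})=0 for m ∈ R, m ≠ 2k₁e₁,
α(L_0, L_{2k₁e₁})=0, α(L_0, L_s)=0 for s ∉ R, and α(L_m,L_n)=0 whenever m+n ≠ 0. -/
def IsNormalized (d : ℕ) (Q : Matrix (Fin d) (Fin d) ℂ) (k : Fin d → ℕ) (hd : 0 < d)
    (α : g d →ₗ[ℂ] g d →ₗ[ℂ] ℂ) : Prop :=
  (∀ m ∈ Rset d Q, m ≠ 2 • k1e1 d k hd →
      α (L d (m - k1e1 d k hd)) (L d (k1e1 d k hd)) = 0) ∧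
  α (L d 0) (L d (2 • k1e1 d k hd)) = 0 ∧
  (∀ s, s ∉ Rset d Q → α (L d 0) (L d s) = 0) ∧
  (∀ m n : Fin d → ℤ, m + n ≠ 0 → α (L d m) (L d n) = 0)

/-- The degree derivation ∂_i, acting by ∂_i(L_m) = m_i L_m. -/
noncomputable def deg (d : ℕ) (i : Fin d) (y : g d) : g d :=
  y.sum fun m a => Finsupp.single m ((m i : ℂ) * a)

open Classical in
/-- The 2-cocycle α₁: α₁(L_m,L_n) = δ_{m+n,0}((m_γ)³-m_γ)/12 for m ∈ R, 0 otherwise,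
where m_γ = (γ|m)/(γ|k₁e₁). -/
noncomputable def alpha1 (d : ℕ) (Q : Matrix (Fin d) (Fin d) ℂ) (γ : Fin d → ℂ)
    (k : Fin d → ℕ) (hd : 0 < d) (x y : g d) : ℂ :=
  x.sum fun m a => y.sum fun n b => a * b *
    (if m ∈ Rset d Q ∧ m + n = 0 then
       ((ip d γ m / ip d γ (k1e1 d k hd)) ^ 3 - ip d γ m / ip d γ (k1e1 d k hd)) / 12
     else 0)

open Classical in
/-- The 2-cocycle α₂: α₂(L_r,L_s) = δ_{r+s,0} σ(r,-r)(γ|r)/(γ|k₁e₁) for r ∉ R,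
0 otherwise. -/
noncomputable def alpha2 (d : ℕ) (Q : Matrix (Fin d) (Fin d) ℂ) (γ : Fin d → ℂ)
    (k : Fin d → ℕ) (hd : 0 < d) (x y : g d) : ℂ :=
  x.sum fun m a => y.sum fun n b => a * b *
    (if m ∉ Rset d Q ∧ m + n = 0 then
       qsigma d Q m (-m) * (ip d γ m / ip d γ (k1e1 d k hd))
     else 0)

end QTorus

open QTorus

namespace QTorus

section Sigma

variable {d : ℕ} {Q : Matrix (Fin d) (Fin d) ℂ}

lemma qsigma_ne_zero (hQ : ∀ i j, Q i j ≠ 0) (m n : Fin d → ℤ) :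
    qsigma d Q m n ≠ 0 := by
  unfold qsigma
  rw [Finset.prod_ne_zero_iff]
  intro i _
  rw [Finset.prod_ne_zero_iff]
  intro j _
  split
  · exact zpow_ne_zero _ (hQ j i)
  · exact one_ne_zero

lemma qsigma_add_left (hQ : ∀ i j, Q i j ≠ 0) (m m' n : Fin d → ℤ) :
    qsigma d Q (m + m') n = qsigma d Q m n * qsigma d Q m' n := by
  unfold qsigma
  rw [← Finset.prod_mul_distrib]
  refine Finset.prod_congr rfl fun i _ => ?_
  rw [← Finset.prod_mul_distrib]
  refine Finset.prod_congr rfl fun j _ => ?_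
  by_cases h : i < j <;>
    simp [h, Pi.add_apply, add_mul, zpow_add₀ (hQ j i)]

lemma qsigma_add_right (hQ : ∀ i j, Q i j ≠ 0) (m n n' : Fin d → ℤ) :
    qsigma d Q m (n + n') = qsigma d Q m n * qsigma d Q m n' := by
  unfold qsigma
  rw [← Finset.prod_mul_distrib]
  refine Finset.prod_congr rfl fun i _ => ?_
  rw [← Finset.prod_mul_distrib]
  refine Finset.prod_congr rfl fun j _ => ?_
  by_cases h : i < j <;>
    simp [h, Pi.add_apply, mul_add, zpow_add₀ (hQ j i)]

lemma qsigma_neg_left (hQ : ∀ i j, Q i j ≠ 0) (m n : Fin d → ℤ) :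
    qsigma d Q (-m) n = (qsigma d Q m n)⁻¹ := by
  unfold qsigma
  rw [← Finset.prod_inv_distrib]
  refine Finset.prod_congr rfl fun i _ => ?_
  rw [← Finset.prod_inv_distrib]
  refine Finset.prod_congr rfl fun j _ => ?_
  by_cases h : i < j <;>
    simp [h, Pi.neg_apply, neg_mul, zpow_neg]

lemma qsigma_neg_right (hQ : ∀ i j, Q i j ≠ 0) (m n : Fin d → ℤ) :
    qsigma d Q m (-n) = (qsigma d Q m n)⁻¹ := by
  unfold qsigma
  rw [← Finset.prod_inv_distrib]
  refine Finset.prod_congr rfl fun i _ => ?_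
  rw [← Finset.prod_inv_distrib]
  refine Finset.prod_congr rfl fun j _ => ?_
  by_cases h : i < j <;>
    simp [h, Pi.neg_apply, mul_neg, zpow_neg]

lemma qsigma_single_left (Q : Matrix (Fin d) (Fin d) ℂ) (a : Fin d) (c : ℤ) (m : Fin d → ℤ) :
    qsigma d Q (Pi.single a c) m = ∏ i : Fin d, if i < a then Q a i ^ (c * m i) else 1 := by
  unfold qsigma
  refine Finset.prod_congr rfl fun i _ => ?_
  rw [Finset.prod_eq_single a]
  · simp [Pi.single_eq_same]
  · intro j _ hj
    simp [Pi.single_eq_of_ne hj]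
  · simp

lemma qsigma_single_right (Q : Matrix (Fin d) (Fin d) ℂ) (a : Fin d) (c : ℤ) (m : Fin d → ℤ) :
    qsigma d Q m (Pi.single a c) = ∏ j : Fin d, if a < j then Q j a ^ (m j * c) else 1 := by
  unfold qsigma
  rw [Finset.prod_comm]
  refine Finset.prod_congr rfl fun j _ => ?_
  rw [Finset.prod_eq_single a]
  · simp [Pi.single_eq_same]
  · intro i _ hi
    simp [Pi.single_eq_of_ne hi]
  · simp

end Sigma

section Ip

variable {d : ℕ} {γ : Fin d → ℂ}

lemma ip_add (m n : Fin d → ℤ) : ip d γ (m + n) = ip d γ m + ip d γ n := by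
  unfold ip
  rw [← Finset.sum_add_distrib]
  refine Finset.sum_congr rfl fun i _ => ?_
  simp only [Pi.add_apply]
  push_cast
  ring

lemma ip_neg (m : Fin d → ℤ) : ip d γ (-m) = - ip d γ m := by
  unfold ip
  rw [← Finset.sum_neg_distrib]
  refine Finset.sum_congr rfl fun i _ => ?_
  simp only [Pi.neg_apply]
  push_cast
  ring

lemma ip_ne_zero (hγ : Generic d γ) {m : Fin d → ℤ} (hm : m ≠ 0) : ip d γ m ≠ 0 := by
  intro h
  apply hm
  have h2 : ∑ i : Fin d, (fun i => (m i : ℚ)) i • γ i = 0 := by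
    rw [← h]
    unfold ip
    refine Finset.sum_congr rfl fun i _ => ?_
    rw [Rat.smul_def]
    push_cast
    ring
  have h3 := Fintype.linearIndependent_iff.mp hγ (fun i => (m i : ℚ)) h2
  funext i
  have h4 : (m i : ℚ) = 0 := h3 i
  simp only [Pi.zero_apply]
  exact_mod_cast h4

end Ip

end QTorus



namespace QTorus

section RsetL

variable {d : ℕ} {Q : Matrix (Fin d) (Fin d) ℂ}

lemma Rset_symm {m : Fin d → ℤ} (hm : m ∈ Rset d Q) (n : Fin d → ℤ) :
    qsigma d Q m n = qsigma d Q n m := hm n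

lemma Rset_zero : (0 : Fin d → ℤ) ∈ Rset d Q := by
  intro n
  have h1 : qsigma d Q 0 n = 1 := by
    unfold qsigma
    refine Finset.prod_eq_one fun i _ => Finset.prod_eq_one fun j _ => ?_
    by_cases h : i < j <;> simp [h]
  have h2 : qsigma d Q n 0 = 1 := by
    unfold qsigma
    refine Finset.prod_eq_one fun i _ => Finset.prod_eq_one fun j _ => ?_
    by_cases h : i < j <;> simp [h]
  rw [h1, h2]

lemma Rset_neg (hQ : ∀ i j, Q i j ≠ 0) {m : Fin d → ℤ} (hm : m ∈ Rset d Q) :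
    -m ∈ Rset d Q := by
  intro n
  rw [qsigma_neg_left hQ, qsigma_neg_right hQ, hm n]

lemma Rset_add (hQ : ∀ i j, Q i j ≠ 0) {m m' : Fin d → ℤ}
    (hm : m ∈ Rset d Q) (hm' : m' ∈ Rset d Q) : m + m' ∈ Rset d Q := by
  intro n
  rw [qsigma_add_left hQ, qsigma_add_right hQ, hm n, hm' n]

lemma notR_add_R (hQ : ∀ i j, Q i j ≠ 0) {r s : Fin d → ℤ}
    (hr : r ∉ Rset d Q) (hs : s ∈ Rset d Q) : r + s ∉ Rset d Q := by
  intro h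
  apply hr
  have := Rset_add hQ h (Rset_neg hQ hs)
  simpa using this

lemma asym_notR_left {r s : Fin d → ℤ} (h : qsigma d Q r s ≠ qsigma d Q s r) :
    r ∉ Rset d Q := fun hr => h (hr s)

lemma asym_notR_right {r s : Fin d → ℤ} (h : qsigma d Q r s ≠ qsigma d Q s r) :
    s ∉ Rset d Q := fun hs => h (hs r).symm

lemma asym_notR_add (hQ : ∀ i j, Q i j ≠ 0) {r s : Fin d → ℤ}
    (h : qsigma d Q r s ≠ qsigma d Q s r) : r + s ∉ Rset d Q := by
  intro hrs
  apply h
  have h1 : qsigma d Q (r + s) r = qsigma d Q r (r + s) := hrs r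
  rw [qsigma_add_left hQ, qsigma_add_right hQ] at h1
  exact mul_left_cancel₀ (qsigma_ne_zero hQ r r) h1.symm

end RsetL

section Bracket

variable {d : ℕ} {Q : Matrix (Fin d) (Fin d) ℂ} {γ : Fin d → ℂ}

lemma br_L (Q : Matrix (Fin d) (Fin d) ℂ) (γ : Fin d → ℂ) (m n : Fin d → ℤ) :
    br d Q γ (L d m) (L d n) = Finsupp.single (m + n) (sc d Q γ m n) := by
  unfold br L
  rw [Finsupp.sum_single_index, Finsupp.sum_single_index]
  · norm_num
  · simp
  · rw [Finsupp.sum_single_index] <;> simp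

lemma apply_single (α : g d →ₗ[ℂ] g d →ₗ[ℂ] ℂ) (a : Fin d → ℤ) (c : ℂ) (y : g d) :
    α (Finsupp.single a c) y = c * α (L d a) y := by
  have : (Finsupp.single a c : g d) = c • L d a := by
    simp [L, Finsupp.smul_single]
  rw [this, map_smul]
  simp

lemma cocycle_basis {α : g d →ₗ[ℂ] g d →ₗ[ℂ] ℂ} (hα : IsCocycle d Q γ α)
    (m n p : Fin d → ℤ) :
    sc d Q γ m n * α (L d (m + n)) (L d p) +
      sc d Q γ p m * α (L d (p + m)) (L d n) +
      sc d Q γ n p * α (L d (n + p)) (L d m) = 0 := by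
  have h := hα.2 (L d m) (L d n) (L d p)
  rw [br_L, br_L, br_L, apply_single, apply_single, apply_single] at h
  exact h

lemma SRel {α : g d →ₗ[ℂ] g d →ₗ[ℂ] ℂ} (hα : IsCocycle d Q γ α) (r s : Fin d → ℤ) :
    sc d Q γ r s * α (L d (r + s)) (L d (-(r + s))) =
      sc d Q γ (-(r + s)) r * α (L d s) (L d (-s)) +
      sc d Q γ s (-(r + s)) * α (L d r) (L d (-r)) := by
  have h := cocycle_basis hα r s (-(r + s))
  have e1 : -(r + s) + r = -s := by abel
  have e2 : s + -(r + s) = -r := by abel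
  rw [e1, e2] at h
  have a1 : α (L d (-s)) (L d s) = - α (L d s) (L d (-s)) := by
    have := hα.1 (L d (-s)) (L d s)
    simpa using this
  have a2 : α (L d (-r)) (L d r) = - α (L d r) (L d (-r)) := by
    have := hα.1 (L d (-r)) (L d r)
    simpa using this
  rw [a1, a2] at h
  linear_combination h

end Bracket

end QTorus


namespace QTorus

section Core

variable {d : ℕ} {Q : Matrix (Fin d) (Fin d) ℂ} {γ : Fin d → ℂ}

/-- The normalized value f(m) = α(m)/(σ(m,-m)(γ|m)). -/
noncomputable def ff (d : ℕ) (Q : Matrix (Fin d) (Fin d) ℂ) (γ : Fin d → ℂ)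
    (α : g d →ₗ[ℂ] g d →ₗ[ℂ] ℂ) (m : Fin d → ℤ) : ℂ :=
  α (L d m) (L d (-m)) / (qsigma d Q m (-m) * ip d γ m)

lemma notR_ne_zero {r : Fin d → ℤ} (hr : r ∉ Rset d Q) : r ≠ 0 := by
  intro h
  exact hr (h ▸ Rset_zero)

lemma K1 (hQ : QOk d Q) (hγ : Generic d γ) {α : g d →ₗ[ℂ] g d →ₗ[ℂ] ℂ}
    (hα : IsCocycle d Q γ α) {r s : Fin d → ℤ}
    (hr : r ∉ Rset d Q) (hs : s ∈ Rset d Q) :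
    ff d Q γ α (r + s) = ff d Q γ α r := by
  have hQ0 := hQ.2.2
  have hrs : r + s ∉ Rset d Q := notR_add_R hQ0 hr hs
  have ht : -(r + s) ∉ Rset d Q := by
    intro h
    exact hrs (by simpa using Rset_neg hQ0 h)
  have h := SRel hα r s
  unfold sc at h
  rw [if_neg hr, if_pos hs, if_neg ht, if_neg hr, if_pos hs, if_neg ht] at h
  have hsym : qsigma d Q s r = qsigma d Q r s := Rset_symm hs r
  simp only [qsigma_neg_left hQ0, qsigma_neg_right hQ0, qsigma_add_left hQ0,
    qsigma_add_right hQ0, ip_neg, ip_add, hsym] at h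
  unfold ff
  simp only [qsigma_neg_left hQ0, qsigma_neg_right hQ0, qsigma_add_left hQ0,
    qsigma_add_right hQ0, ip_neg, ip_add, hsym]
  have ha := qsigma_ne_zero hQ0 r r
  have hb := qsigma_ne_zero hQ0 s s
  have hc := qsigma_ne_zero hQ0 r s
  have hIr := ip_ne_zero hγ (notR_ne_zero hr)
  have hIrs : ip d γ r + ip d γ s ≠ 0 := by
    have := ip_ne_zero hγ (notR_ne_zero hrs)
    rwa [ip_add] at this
  field_simp at h ⊢
  have hX : qsigma d Q r s ^ 2 * ip d γ r * (α (L d (r + s))) (L d (-(r + s))) * qsigma d Q s s -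
      (ip d γ r + ip d γ s) * (α (L d r)) (L d (-r)) = 0 := by
    have h' : qsigma d Q r r * (qsigma d Q r s ^ 2 * ip d γ r * (α (L d (r + s))) (L d (-(r + s))) *
        qsigma d Q s s - (ip d γ r + ip d γ s) * (α (L d r)) (L d (-r))) = 0 := by
      linear_combination -h
    exact (mul_eq_zero.mp h').resolve_left ha
  linear_combination hX


lemma Nrel (hQ : QOk d Q) (hγ : Generic d γ) {α : g d →ₗ[ℂ] g d →ₗ[ℂ] ℂ}
    (hα : IsCocycle d Q γ α) {r s : Fin d → ℤ}
    (hne : qsigma d Q r s ≠ qsigma d Q s r) :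
    ip d γ (r + s) * ff d Q γ α (r + s) =
      ip d γ r * ff d Q γ α r + ip d γ s * ff d Q γ α s := by
  have hQ0 := hQ.2.2
  have hr : r ∉ Rset d Q := asym_notR_left hne
  have hs : s ∉ Rset d Q := asym_notR_right hne
  have hrs : r + s ∉ Rset d Q := asym_notR_add hQ0 hne
  have ht : -(r + s) ∉ Rset d Q := by
    intro h
    exact hrs (by simpa using Rset_neg hQ0 h)
  have h := SRel hα r s
  unfold sc at h
  rw [if_neg hr, if_neg hs, if_neg ht, if_neg hr, if_neg hs, if_neg ht] at h
  unfold ff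
  simp only [qsigma_neg_left hQ0, qsigma_neg_right hQ0, qsigma_add_left hQ0,
    qsigma_add_right hQ0, ip_neg, ip_add] at h ⊢
  have ha := qsigma_ne_zero hQ0 r r
  have hb := qsigma_ne_zero hQ0 s s
  have hc := qsigma_ne_zero hQ0 r s
  have he := qsigma_ne_zero hQ0 s r
  have hce : qsigma d Q r s - qsigma d Q s r ≠ 0 := sub_ne_zero.mpr hne
  have hIr := ip_ne_zero hγ (notR_ne_zero hr)
  have hIs := ip_ne_zero hγ (notR_ne_zero hs)
  have hIrs : ip d γ r + ip d γ s ≠ 0 := by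
    have := ip_ne_zero hγ (notR_ne_zero hrs)
    rwa [ip_add] at this
  field_simp at h ⊢
  refine mul_left_cancel₀ (a := (qsigma d Q r s - qsigma d Q s r) *
    (qsigma d Q r r * qsigma d Q s r * qsigma d Q r s * qsigma d Q s s))
    (by exact mul_ne_zero hce (by exact mul_ne_zero (mul_ne_zero (mul_ne_zero ha he) hc) hb)) ?_
  linear_combination (qsigma d Q r s * qsigma d Q s r * qsigma d Q r r * qsigma d Q s s *
    (qsigma d Q r s - qsigma d Q s r)) * h


lemma K2 (hQ : QOk d Q) (hγ : Generic d γ) {α : g d →ₗ[ℂ] g d →ₗ[ℂ] ℂ}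
    (hα : IsCocycle d Q γ α) (t₀ : Fin d → ℤ) (ht : t₀ ∈ Rset d Q) (ht0 : t₀ ≠ 0)
    {r s : Fin d → ℤ} (hne : qsigma d Q r s ≠ qsigma d Q s r) :
    ff d Q γ α r = ff d Q γ α s ∧ ff d Q γ α (r + s) = ff d Q γ α s := by
  have hQ0 := hQ.2.2
  have hr : r ∉ Rset d Q := asym_notR_left hne
  have hs : s ∉ Rset d Q := asym_notR_right hne
  have hrs : r + s ∉ Rset d Q := asym_notR_add hQ0 hne
  have hne' : qsigma d Q r (s + t₀) ≠ qsigma d Q (s + t₀) r := by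
    rw [qsigma_add_right hQ0, qsigma_add_left hQ0, Rset_symm ht r]
    intro heq
    exact hne (mul_right_cancel₀ (qsigma_ne_zero hQ0 r t₀) heq)
  have N1 := Nrel hQ hγ hα hne
  have N2 := Nrel hQ hγ hα hne'
  rw [← add_assoc r s t₀] at N2
  have hfs : ff d Q γ α (s + t₀) = ff d Q γ α s := K1 hQ hγ hα hs ht
  have hfrs : ff d Q γ α (r + s + t₀) = ff d Q γ α (r + s) := K1 hQ hγ hα hrs ht
  rw [hfs, hfrs, ip_add, ip_add, ip_add] at N2
  rw [ip_add] at N1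
  have hIt : ip d γ t₀ ≠ 0 := ip_ne_zero hγ ht0
  have hIr : ip d γ r ≠ 0 := ip_ne_zero hγ (notR_ne_zero hr)
  have h1 : ff d Q γ α (r + s) = ff d Q γ α s := by
    apply mul_left_cancel₀ hIt
    linear_combination N2 - N1
  refine ⟨?_, h1⟩
  rw [h1] at N1
  have h2 : ip d γ r * ff d Q γ α s = ip d γ r * ff d Q γ α r := by
    linear_combination N1
  exact (mul_left_cancel₀ hIr h2).symm


section RNF

variable {d : ℕ} {Q : Matrix (Fin d) (Fin d) ℂ} {z : ℕ} {k : Fin d → ℕ}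

lemma q_prim (hRNF : IsRNF d Q z k) {l : ℕ} (hl : l < z) (hp : 2*l < d) (hp1 : 2*l+1 < d) :
    IsPrimitiveRoot (Q ⟨2*l+1, hp1⟩ ⟨2*l, hp⟩) (k ⟨2*l, hp⟩) := by
  obtain ⟨h1, h2, h3, h4⟩ := hRNF.2.2.2.1 l hl hp hp1
  rw [h2]
  exact h1.inv

lemma k_gt_one (hRNF : IsRNF d Q z k) {l : ℕ} (hl : l < z) (hp : 2*l < d) (hp1 : 2*l+1 < d) :
    1 < k ⟨2*l, hp⟩ := (hRNF.2.2.2.1 l hl hp hp1).2.2.2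

lemma q_zpow_eq_one_iff (hRNF : IsRNF d Q z k) {l : ℕ} (hl : l < z) (hp : 2*l < d)
    (hp1 : 2*l+1 < d) (t : ℤ) :
    Q ⟨2*l+1, hp1⟩ ⟨2*l, hp⟩ ^ t = 1 ↔ ((k ⟨2*l, hp⟩ : ℤ)) ∣ t :=
  (q_prim hRNF hl hp hp1).zpow_eq_one_iff_dvd t

lemma q_ne_one (hRNF : IsRNF d Q z k) {l : ℕ} (hl : l < z) (hp : 2*l < d) (hp1 : 2*l+1 < d) :
    Q ⟨2*l+1, hp1⟩ ⟨2*l, hp⟩ ≠ 1 := by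
  intro h
  have h1 : Q ⟨2*l+1, hp1⟩ ⟨2*l, hp⟩ ^ (1 : ℤ) = 1 := by rw [h]; norm_num
  have h2 := (q_zpow_eq_one_iff hRNF hl hp hp1 1).mp h1
  have h3 : k ⟨2*l, hp⟩ ∣ 1 := by exact_mod_cast h2
  have h4 := k_gt_one hRNF hl hp hp1
  have := Nat.le_of_dvd one_pos h3
  omega

lemma U1 (hRNF : IsRNF d Q z k) {l : ℕ} (hl : l < z) (hp : 2*l < d) (hp1 : 2*l+1 < d)
    (m : Fin d → ℤ) :
    qsigma d Q (Pi.single ⟨2*l+1, hp1⟩ 1) m =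
      Q ⟨2*l+1, hp1⟩ ⟨2*l, hp⟩ ^ (m ⟨2*l, hp⟩) := by
  rw [qsigma_single_left]
  rw [Finset.prod_eq_single (⟨2*l, hp⟩ : Fin d)]
  · rw [if_pos (by simp [Fin.mk_lt_mk]), one_mul]
  · intro i _ hi
    by_cases hlt : i < (⟨2*l+1, hp1⟩ : Fin d)
    · rw [if_pos hlt, hRNF.2.2.1 _ _ ?_, one_zpow]
      have hiv : i.val ≠ 2*l := fun h => hi (Fin.ext h)
      rintro ⟨l', hl', (⟨h1, h2⟩ | ⟨h1, h2⟩)⟩ <;> simp only [Fin.val_mk] at h1 h2 <;> omega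
    · rw [if_neg hlt]
  · simp

lemma U2 (hRNF : IsRNF d Q z k) {l : ℕ} (hl : l < z) (hp : 2*l < d) (hp1 : 2*l+1 < d)
    (m : Fin d → ℤ) :
    qsigma d Q m (Pi.single ⟨2*l+1, hp1⟩ 1) = 1 := by
  rw [qsigma_single_right]
  refine Finset.prod_eq_one fun j _ => ?_
  by_cases hlt : (⟨2*l+1, hp1⟩ : Fin d) < j
  · rw [if_pos hlt, hRNF.2.2.1 _ _ ?_, one_zpow]
    have hjv : 2*l+1 < j.val := hlt
    rintro ⟨l', hl', (⟨h1, h2⟩ | ⟨h1, h2⟩)⟩ <;> simp only [Fin.val_mk] at h1 h2 <;> omega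
  · rw [if_neg hlt]

lemma U3 (hRNF : IsRNF d Q z k) {l : ℕ} (hl : l < z) (hp : 2*l < d) (hp1 : 2*l+1 < d)
    (m : Fin d → ℤ) :
    qsigma d Q m (Pi.single ⟨2*l, hp⟩ 1) =
      Q ⟨2*l+1, hp1⟩ ⟨2*l, hp⟩ ^ (m ⟨2*l+1, hp1⟩) := by
  rw [qsigma_single_right]
  rw [Finset.prod_eq_single (⟨2*l+1, hp1⟩ : Fin d)]
  · rw [if_pos (by simp [Fin.mk_lt_mk]), mul_one]
  · intro j _ hj
    by_cases hlt : (⟨2*l, hp⟩ : Fin d) < j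
    · rw [if_pos hlt, hRNF.2.2.1 _ _ ?_, one_zpow]
      have hjv : j.val ≠ 2*l+1 := fun h => hj (Fin.ext h)
      have hjv2 : 2*l < j.val := hlt
      rintro ⟨l', hl', (⟨h1, h2⟩ | ⟨h1, h2⟩)⟩ <;> simp only [Fin.val_mk] at h1 h2 <;> omega
    · rw [if_neg hlt]
  · simp

lemma U4 (hRNF : IsRNF d Q z k) {l : ℕ} (hl : l < z) (hp : 2*l < d) (hp1 : 2*l+1 < d)
    (m : Fin d → ℤ) :
    qsigma d Q (Pi.single ⟨2*l, hp⟩ 1) m = 1 := by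
  rw [qsigma_single_left]
  refine Finset.prod_eq_one fun i _ => ?_
  by_cases hlt : i < (⟨2*l, hp⟩ : Fin d)
  · rw [if_pos hlt, hRNF.2.2.1 _ _ ?_, one_zpow]
    have hiv : i.val < 2*l := hlt
    rintro ⟨l', hl', (⟨h1, h2⟩ | ⟨h1, h2⟩)⟩ <;> simp only [Fin.val_mk] at h1 h2 <;> omega
  · rw [if_neg hlt]

end RNF


section RChar

variable {d : ℕ} {Q : Matrix (Fin d) (Fin d) ℂ} {z : ℕ} {k : Fin d → ℕ}

lemma R_of_dvd (hRNF : IsRNF d Q z k) (m : Fin d → ℤ)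
    (hdvd : ∀ (l : ℕ) (hl : l < z) (hp : 2*l < d) (hp1 : 2*l+1 < d),
      ((k ⟨2*l, hp⟩ : ℤ)) ∣ m ⟨2*l, hp⟩ ∧ ((k ⟨2*l, hp⟩ : ℤ)) ∣ m ⟨2*l+1, hp1⟩) :
    m ∈ Rset d Q := by
  intro n
  unfold qsigma
  refine Finset.prod_congr rfl fun i _ => Finset.prod_congr rfl fun j _ => ?_
  by_cases hij : i < j
  · rw [if_pos hij, if_pos hij]
    by_cases hod : OffDiagPair z j.val i.val
    · obtain ⟨l', hl', (⟨h1, h2⟩ | ⟨h1, h2⟩)⟩ := hod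
      · exfalso
        have : i.val < j.val := hij
        omega
      · have hp : 2*l' < d := h2 ▸ i.isLt
        have hp1 : 2*l'+1 < d := h1 ▸ j.isLt
        have hi : i = ⟨2*l', hp⟩ := Fin.ext h2
        have hj : j = ⟨2*l'+1, hp1⟩ := Fin.ext h1
        rw [hi, hj]
        rw [(q_zpow_eq_one_iff hRNF hl' hp hp1 _).mpr
          (Dvd.dvd.mul_right (hdvd l' hl' hp hp1).2 _),
          (q_zpow_eq_one_iff hRNF hl' hp hp1 _).mpr
          (Dvd.dvd.mul_left (hdvd l' hl' hp hp1).1 _)]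
    · rw [hRNF.2.2.1 _ _ hod, one_zpow, one_zpow]
  · rw [if_neg hij, if_neg hij]

lemma exists_bad (hRNF : IsRNF d Q z k) {m : Fin d → ℤ} (hm : m ∉ Rset d Q) :
    ∃ (l : ℕ) (hl : l < z) (hp : 2*l < d) (hp1 : 2*l+1 < d),
      ¬ ((k ⟨2*l, hp⟩ : ℤ)) ∣ m ⟨2*l, hp⟩ ∨ ¬ ((k ⟨2*l, hp⟩ : ℤ)) ∣ m ⟨2*l+1, hp1⟩ := by
  by_contra hcon
  push_neg at hcon
  exact hm (R_of_dvd hRNF m hcon)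

end RChar

end Core

end QTorus

/-- for Q in rational normal form, γ generic, and α a normalized
2-cocycle, writing α(m) = α(L_m, L_{-m}): if m ∉ R and m_i ≠ 0 for some odd index i
with 1 ≤ i ≤ 2z (0-based: an even index i with i < 2z), then
α(m) = ((γ|m)/(γ|e₁)) σ(m,−m) α(e₁). -/
theorem stmt15 (d : ℕ) (hd1 : 1 < d) (hd : 0 < d)
    (Q : Matrix (Fin d) (Fin d) ℂ) (hQ : QOk d Q)
    (z : ℕ) (k : Fin d → ℕ) (hRNF : IsRNF d Q z k)
    (γ : Fin d → ℂ) (hγ : Generic d γ)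
    (α : g d →ₗ[ℂ] g d →ₗ[ℂ] ℂ) (hα : IsCocycle d Q γ α)
    (hnorm : IsNormalized d Q k hd α) :
    ∀ m : Fin d → ℤ, m ∉ Rset d Q →
      (∃ i : Fin d, (∃ l : ℕ, l < z ∧ i.val = 2 * l) ∧ m i ≠ 0) →
      α (L d m) (L d (-m)) =
        (ip d γ m / ip d γ (Pi.single ⟨0, hd⟩ 1)) * qsigma d Q m (-m) *
          α (L d (Pi.single ⟨0, hd⟩ 1)) (L d (-(Pi.single ⟨0, hd⟩ 1))) := by
  intro m hm _
  have hQ0 := hQ.2.2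
  have hz : 0 < z := hRNF.1
  have hp0 : 2*0 < d := by omega
  have hp01 : 2*0+1 < d := by omega
  have hfin0 : (⟨2*0, hp0⟩ : Fin d) = ⟨0, hd⟩ := Fin.ext (by norm_num)
  have hE0 : (Pi.single (⟨2*0, hp0⟩ : Fin d) (1 : ℤ) : Fin d → ℤ) = Pi.single ⟨0, hd⟩ 1 := by
    rw [hfin0]
  -- t₀ = k₁·e₁ ∈ R
  have ht₀R : (Pi.single (⟨0, hd⟩ : Fin d) ((k ⟨0, hd⟩ : ℤ)) : Fin d → ℤ) ∈ Rset d Q := by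
    apply R_of_dvd hRNF
    intro l hl hp hp1
    refine ⟨?_, ?_⟩
    · by_cases hl0 : l = 0
      · subst hl0
        have h1 : (⟨2*0, hp⟩ : Fin d) = ⟨0, hd⟩ := Fin.ext (by norm_num)
        rw [h1, Pi.single_eq_same]
      · rw [Pi.single_eq_of_ne (Fin.ne_of_val_ne (by simp only [Fin.val_mk]; omega))]
        exact dvd_zero _
    · rw [Pi.single_eq_of_ne (Fin.ne_of_val_ne (by simp only [Fin.val_mk]; omega))]
      exact dvd_zero _
  have hkpos : 1 < k ⟨0, hd⟩ := by
    have h := k_gt_one hRNF hz hp0 hp01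
    rwa [hfin0] at h
  have ht₀0 : (Pi.single (⟨0, hd⟩ : Fin d) ((k ⟨0, hd⟩ : ℤ)) : Fin d → ℤ) ≠ 0 := by
    intro h
    have h2 := congrFun h ⟨0, hd⟩
    rw [Pi.single_eq_same] at h2
    simp only [Pi.zero_apply] at h2
    omega
  have K2A : ∀ {r s : Fin d → ℤ}, qsigma d Q r s ≠ qsigma d Q s r →
      ff d Q γ α r = ff d Q γ α s :=
    fun hne => (K2 hQ hγ hα _ ht₀R ht₀0 hne).1
  -- odd-even unit link
  have hOE : ∀ (l : ℕ) (hl : l < z) (hp : 2*l < d) (hp1 : 2*l+1 < d),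
      ff d Q γ α (Pi.single ⟨2*l+1, hp1⟩ 1) = ff d Q γ α (Pi.single ⟨2*l, hp⟩ 1) := by
    intro l hl hp hp1
    apply K2A
    rw [U1 hRNF hl hp hp1, U2 hRNF hl hp hp1, Pi.single_eq_same, zpow_one]
    exact q_ne_one hRNF hl hp hp1
  -- step 2 : ff m = ff (odd unit at some bad pair l)
  obtain ⟨l, hl, hp, hp1, hbad⟩ := exists_bad hRNF hm
  have hstep2 : ff d Q γ α m = ff d Q γ α (Pi.single ⟨2*l+1, hp1⟩ 1) := by
    rcases hbad with hbad | hbad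
    · refine (K2A ?_).symm
      rw [U1 hRNF hl hp hp1, U2 hRNF hl hp hp1]
      intro h
      exact hbad ((q_zpow_eq_one_iff hRNF hl hp hp1 _).mp h)
    · have h1 : ff d Q γ α m = ff d Q γ α (Pi.single ⟨2*l, hp⟩ 1) := by
        apply K2A
        rw [U3 hRNF hl hp hp1, U4 hRNF hl hp hp1]
        intro h
        exact hbad ((q_zpow_eq_one_iff hRNF hl hp hp1 _).mp h)
      rw [h1, ← hOE l hl hp hp1]
  -- step 3 : ff (odd unit at l) = ff e1
  have hstep3 : ff d Q γ α (Pi.single ⟨2*l+1, hp1⟩ 1) =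
      ff d Q γ α (Pi.single ⟨0, hd⟩ 1) := by
    by_cases hl0 : l = 0
    · subst hl0
      rw [hOE 0 hz hp hp1]
    · have hw2l : ((Pi.single (⟨2*l, hp⟩ : Fin d) 1 + Pi.single ⟨0, hd⟩ 1 : Fin d → ℤ))
          ⟨2*l, hp⟩ = 1 := by
        have h1 : (Pi.single (⟨0, hd⟩ : Fin d) 1 : Fin d → ℤ) ⟨2*l, hp⟩ = 0 :=
          Pi.single_eq_of_ne (Fin.ne_of_val_ne (by simp only [Fin.val_mk]; omega)) _
        rw [Pi.add_apply, h1, Pi.single_eq_same]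
        norm_num
      have hw0 : ((Pi.single (⟨2*l, hp⟩ : Fin d) 1 + Pi.single ⟨0, hd⟩ 1 : Fin d → ℤ))
          ⟨2*0, hp0⟩ = 1 := by
        have h1 : (Pi.single (⟨2*l, hp⟩ : Fin d) 1 : Fin d → ℤ) ⟨2*0, hp0⟩ = 0 :=
          Pi.single_eq_of_ne (Fin.ne_of_val_ne (by simp only [Fin.val_mk]; omega)) _
        rw [Pi.add_apply, h1, hfin0, Pi.single_eq_same]
        norm_num
      have e1a : ff d Q γ α (Pi.single ⟨2*l+1, hp1⟩ 1) =
          ff d Q γ α (Pi.single ⟨2*l, hp⟩ 1 + Pi.single ⟨0, hd⟩ 1) := by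
        apply K2A
        rw [U1 hRNF hl hp hp1, U2 hRNF hl hp hp1, hw2l, zpow_one]
        exact q_ne_one hRNF hl hp hp1
      have e1b : ff d Q γ α (Pi.single ⟨2*0+1, hp01⟩ 1) =
          ff d Q γ α (Pi.single ⟨2*l, hp⟩ 1 + Pi.single ⟨0, hd⟩ 1) := by
        apply K2A
        rw [U1 hRNF hz hp0 hp01, U2 hRNF hz hp0 hp01, hw0, zpow_one]
        exact q_ne_one hRNF hz hp0 hp01
      rw [e1a, ← e1b, hOE 0 hz hp0 hp01, hE0]
  have hfinal : ff d Q γ α m = ff d Q γ α (Pi.single ⟨0, hd⟩ 1) := hstep2.trans hstep3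
  -- assemble
  have he1ne : (Pi.single (⟨0, hd⟩ : Fin d) 1 : Fin d → ℤ) ≠ 0 := by
    intro h
    have h2 := congrFun h ⟨0, hd⟩
    rw [Pi.single_eq_same] at h2
    simp only [Pi.zero_apply] at h2
    exact one_ne_zero h2
  have hIe1 : ip d γ (Pi.single ⟨0, hd⟩ 1) ≠ 0 := ip_ne_zero hγ he1ne
  have hIm : ip d γ m ≠ 0 := ip_ne_zero hγ (notR_ne_zero hm)
  have hSm : qsigma d Q m (-m) ≠ 0 := qsigma_ne_zero hQ0 m (-m)
  have hSe1 : qsigma d Q (Pi.single ⟨0, hd⟩ 1) (-(Pi.single ⟨0, hd⟩ 1)) = 1 := by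
    have h := U4 hRNF hz hp0 hp01 (-(Pi.single ⟨0, hd⟩ 1))
    rwa [hE0] at h
  have hAm : α (L d m) (L d (-m)) =
      ff d Q γ α m * (qsigma d Q m (-m) * ip d γ m) := by
    rw [ff, div_mul_cancel₀]
    exact mul_ne_zero hSm hIm
  have hAe1 : α (L d (Pi.single ⟨0, hd⟩ 1)) (L d (-(Pi.single ⟨0, hd⟩ 1))) =
      ff d Q γ α (Pi.single ⟨0, hd⟩ 1) * ip d γ (Pi.single ⟨0, hd⟩ 1) := by
    rw [ff, hSe1, one_mul, div_mul_cancel₀ _ hIe1]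
  rw [hAm, hAe1, hfinal]
  field_simp
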